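/- Let G be an index coding instance on n ≥ 1 messages, q a positive integer, t = (t_1,…,t_n) a tuple of positive integers, j ∈ [n], and l ∈ [t_j]. Then the component confusion graph Γ_t^{(jl)}(G) is perfect: for every subset W of its vertex set, the chromatic number of the subgraph induced by W equals the clique number of the subgraph induced by W. -/

import Mathlib

namespace IC

/-- Two message tuples (with `x_i ∈ {0,…,q−1}^{t_i}`) are confusable at
position `l` of node `j` for the directed graph with edge relation `E`. -/
def ConfusableAt {n q : ℕ} (E : Fin n → Fin n → Prop) (t : Fin n → ℕ)
    (j : Fin n) (l : Fin (t j))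
    (x z : ∀ i : Fin n, Fin (t i) → Fin q) : Prop :=
  x j l ≠ z j l ∧ ∀ i : Fin n, E i j → x i = z i

/-- The component confusion graph `Γ_t^{(jl)}(G)`. -/
def componentConfusionGraph {n : ℕ} (q : ℕ) (E : Fin n → Fin n → Prop) (t : Fin n → ℕ)
    (j : Fin n) (l : Fin (t j)) :
    SimpleGraph (∀ i : Fin n, Fin (t i) → Fin q) where
  Adj x z := ConfusableAt E t j l x z
  symm := ⟨fun _ _ ⟨h1, h2⟩ => ⟨h1.symm, fun i hi => (h2 i hi).symm⟩⟩
  loopless := ⟨fun _ ⟨h1, _⟩ => h1 rfl⟩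

/-- The confusion graph `Γ_t(G)`. -/
def confusionGraph {n : ℕ} (q : ℕ) (E : Fin n → Fin n → Prop) (t : Fin n → ℕ) :
    SimpleGraph (∀ i : Fin n, Fin (t i) → Fin q) where
  Adj x z := ∃ (j : Fin n) (l : Fin (t j)), ConfusableAt E t j l x z
  symm := ⟨fun _ _ ⟨j, l, h1, h2⟩ => ⟨j, l, h1.symm, fun i hi => (h2 i hi).symm⟩⟩
  loopless := ⟨fun _ ⟨_, _, h1, _⟩ => h1 rfl⟩

end IC

/-- The component confusion graph `Γ_t^{(jl)}(G)` is perfect: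
every vertex-induced subgraph has chromatic number equal to clique number. -/
theorem componentConfusionGraph_perfect
    (n q : ℕ) (hn : 1 ≤ n) (hq : 1 ≤ q)
    (E : Fin n → Fin n → Prop) (hE : ∀ i, ¬ E i i)
    (t : Fin n → ℕ) (ht : ∀ j, 1 ≤ t j)
    (j : Fin n) (l : Fin (t j)) :
    ∀ W : Set (∀ i : Fin n, Fin (t i) → Fin q),
      ((IC.componentConfusionGraph q E t j l).induce W).chromaticNumber =
        ((((IC.componentConfusionGraph q E t j l).induce W).cliqueNum : ℕ) : ℕ∞) := by
  classical
  intro W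
  haveI : Fintype W := Fintype.ofFinite W
  set G := IC.componentConfusionGraph q E t j l with hG
  -- the agreement relation on side information
  let R : (∀ i : Fin n, Fin (t i) → Fin q) → (∀ i : Fin n, Fin (t i) → Fin q) → Prop :=
    fun x z => ∀ i : Fin n, E i j → x i = z i
  have hRrefl : ∀ x, R x x := fun x i _ => rfl
  have hRsymm : ∀ x z, R x z → R z x := fun x z h i hi => (h i hi).symm
  have hRtrans : ∀ x y z, R x y → R y z → R x z :=
    fun x y z h1 h2 i hi => (h1 i hi).trans (h2 i hi)
  have hAdj : ∀ x z : W, (G.induce W).Adj x z ↔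
      ((x : ∀ i : Fin n, Fin (t i) → Fin q) j l ≠ (z : ∀ i : Fin n, Fin (t i) → Fin q) j l
        ∧ R (x : _) (z : _)) := fun x z => Iff.rfl
  -- the set of values used at position (j,l) in the side-information class of x
  let F : W → Finset (Fin q) := fun x =>
    Finset.image (fun y : W => (y : ∀ i : Fin n, Fin (t i) → Fin q) j l)
      (Finset.univ.filter fun y : W => R (y : _) (x : _))
  have hmemF : ∀ x : W, (x : ∀ i : Fin n, Fin (t i) → Fin q) j l ∈ F x := by
    intro x
    exact Finset.mem_image.2 ⟨x, Finset.mem_filter.2 ⟨Finset.mem_univ _, hRrefl _⟩, rfl⟩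
  have hFeq : ∀ x z : W, R (x : _) (z : _) → F x = F z := by
    intro x z h
    have : (Finset.univ.filter fun y : W => R (y : _) (x : _)) =
        (Finset.univ.filter fun y : W => R (y : _) (z : _)) := by
      apply Finset.filter_congr
      intro y _
      exact ⟨fun hy => hRtrans _ _ _ hy h, fun hy => hRtrans _ _ _ hy (hRsymm _ _ h)⟩
    simp only [F, this]
  -- the coloring: rank of x j l within F x
  let col : W → ℕ := fun x =>
    ((F x).filter (fun a => a < (x : ∀ i : Fin n, Fin (t i) → Fin q) j l)).card
  have hcol_lt : ∀ x : W, col x < (F x).card := by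
    intro x
    apply Finset.card_lt_card
    rw [Finset.filter_ssubset]
    exact ⟨_, hmemF x, lt_irrefl _⟩
  have hcol_mono : ∀ x z : W, F x = F z →
      (x : ∀ i : Fin n, Fin (t i) → Fin q) j l < (z : ∀ i : Fin n, Fin (t i) → Fin q) j l →
      col x < col z := by
    intro x z hF hlt
    apply Finset.card_lt_card
    rw [hF]
    constructor
    · exact Finset.monotone_filter_right _ (fun a _ ha => lt_trans ha hlt)
    · intro hsub
      have := hsub (Finset.mem_filter.2 ⟨hF ▸ hmemF x, hlt⟩)
      exact lt_irrefl _ (Finset.mem_filter.1 this).2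
  -- each F x gives a clique of the same size
  have hFcard : ∀ x : W, (F x).card ≤ (G.induce W).cliqueNum := by
    intro x
    have hx : ∀ a ∈ F x, ∃ y : W, R (y : _) (x : _) ∧
        (y : ∀ i : Fin n, Fin (t i) → Fin q) j l = a := by
      intro a ha
      obtain ⟨y, hy, hya⟩ := Finset.mem_image.1 ha
      exact ⟨y, (Finset.mem_filter.1 hy).2, hya⟩
    choose f hf1 hf2 using hx
    let s : Finset W := (F x).attach.image (fun a => f a.1 a.2)
    have hcards : s.card = (F x).card := by
      rw [Finset.card_image_of_injOn, Finset.card_attach]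
      intro a _ b _ hab
      apply Subtype.ext
      rw [← hf2 a.1 a.2, ← hf2 b.1 b.2]
      exact congrArg (fun y : ↑W => (y : ∀ i : Fin n, Fin (t i) → Fin q) j l) hab
    have hcl : (G.induce W).IsClique s := by
      intro u hu v hv huv
      simp only [s, Finset.coe_image, Set.mem_image, Finset.mem_coe,
        Finset.mem_attach] at hu hv
      obtain ⟨a, -, rfl⟩ := hu
      obtain ⟨b, -, rfl⟩ := hv
      rw [hAdj]
      refine ⟨?_, hRtrans _ _ _ (hf1 a.1 a.2) (hRsymm _ _ (hf1 b.1 b.2))⟩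
      rw [hf2, hf2]
      intro hab
      exact huv (congrArg (fun c : {c // c ∈ F x} => f c.1 c.2) (Subtype.ext hab))
    calc (F x).card = s.card := hcards.symm
      _ ≤ (G.induce W).cliqueNum := SimpleGraph.IsClique.card_le_cliqueNum (tc := hcl)
  -- the coloring is proper
  have hcolorable : (G.induce W).Colorable ((G.induce W).cliqueNum) := by
    refine ⟨⟨fun x => ⟨col x, lt_of_lt_of_le (hcol_lt x) (hFcard x)⟩, ?_⟩⟩
    intro x z hxz hcontra
    obtain ⟨hne, hR⟩ := (hAdj x z).1 hxz
    have hF := hFeq x z hR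
    have hcoleq : col x = col z := by
      simpa using congrArg Fin.val hcontra
    rcases lt_or_gt_of_ne hne with h | h
    · exact absurd hcoleq (Nat.ne_of_lt (hcol_mono x z hF h))
    · exact absurd hcoleq.symm (Nat.ne_of_lt (hcol_mono z x hF.symm h))
  -- conclude
  apply le_antisymm
  · exact hcolorable.chromaticNumber_le
  · obtain ⟨s, hs⟩ := (G.induce W).exists_isNClique_cliqueNum
    have := hs.isClique.card_le_chromaticNumber
    rwa [hs.card_eq] at this
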